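/- Let n ∈ ℕ, let F be a Borel probability measure on [0,∞)^n, let m ∈ ℕ, and let A_1,…,A_m ⊆ [0,∞)^n be Borel sets with ⋃_{i=1}^m A_i = [0,∞)^n. Then Rev(F) ≤ Σ_{i=1}^m F(A_i) · Rev(F|_{A_i}) in [0,∞], with the convention that F(S) · Rev(F|_S) := 0 whenever F(S) = 0. -/

import Mathlib

open MeasureTheory ProbabilityTheory Set
open scoped NNReal ENNReal

noncomputable section

/-- The space of buyer types for `n` items: vectors in `[0,∞)^n`. -/
abbrev BuyerType (n : ℕ) := Fin n → ℝ≥0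

/-- An `n`-item outcome: allocation probabilities together with a price. -/
abbrev Outcome (n : ℕ) := (Fin n → ℝ) × ℝ

/-- An outcome is valid if all allocation probabilities are in `[0,1]` and the price is `≥ 0`. -/
def ValidOutcome {n : ℕ} (e : Outcome n) : Prop :=
  (∀ i, 0 ≤ e.1 i ∧ e.1 i ≤ 1) ∧ 0 ≤ e.2

/-- The zero entry `(0,…,0;0)`. -/
def zeroEntry (n : ℕ) : Outcome n := (fun _ => 0, 0)

/-- The utility of buyer type `v` from outcome `e`. -/
def utility {n : ℕ} (e : Outcome n) (v : BuyerType n) : ℝ :=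
  (∑ i, e.1 i * (v i : ℝ)) - e.2

/-- An individually rational menu: a set of valid outcomes containing the zero entry. -/
def IRMenu {n : ℕ} (M : Set (Outcome n)) : Prop :=
  (∀ e ∈ M, ValidOutcome e) ∧ zeroEntry n ∈ M

/-- A choice function for menu `M`: for every buyer type it picks a utility-maximizing
entry of maximal price among the utility-maximizing entries, with Borel-measurable price. -/
def IsChoice {n : ℕ} (M : Set (Outcome n)) (t : BuyerType n → Outcome n) : Prop :=
  (∀ v, t v ∈ M) ∧
  (∀ v, ∀ e ∈ M, utility e v ≤ utility (t v) v) ∧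
  (∀ v, ∀ e ∈ M, utility e v = utility (t v) v → e.2 ≤ (t v).2) ∧
  Measurable fun v => (t v).2

/-- The revenue of a menu equipped with choice function `t` from distribution `F`. -/
def revenue {n : ℕ} (t : BuyerType n → Outcome n) (F : Measure (BuyerType n)) : ℝ≥0∞ :=
  ∫⁻ v, ENNReal.ofReal ((t v).2) ∂F

/-- The menu size: the number of entries other than the zero entry. -/
def menuSize {n : ℕ} (M : Set (Outcome n)) : ℕ∞ :=
  (M \ {zeroEntry n}).encard

/-- The optimal revenue obtainable from `F` by an IR menu with a choice function. -/
def Rev {n : ℕ} (F : Measure (BuyerType n)) : ℝ≥0∞ :=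
  ⨆ (Mt : Set (Outcome n) × (BuyerType n → Outcome n))
    (_ : IRMenu Mt.1 ∧ IsChoice Mt.1 Mt.2), revenue Mt.2 F

/-- The optimal revenue obtainable from `F` by an IR menu of menu size at most `C`. -/
def RevC {n : ℕ} (C : ℕ) (F : Measure (BuyerType n)) : ℝ≥0∞ :=
  ⨆ (Mt : Set (Outcome n) × (BuyerType n → Outcome n))
    (_ : IRMenu Mt.1 ∧ IsChoice Mt.1 Mt.2 ∧ menuSize Mt.1 ≤ (C : ℕ∞)),
    revenue Mt.2 F

/-- Embedding of a single item value as a buyer type for one item. -/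
def toOne (x : ℝ≥0) : BuyerType 1 := fun _ => x

/-- The optimal single-item revenue from a value distribution `G` on `[0,∞)`. -/
def Rev1 (G : Measure ℝ≥0) : ℝ≥0∞ := Rev (G.map toOne)

/-- `EU n H`: the set of buyer types with at most one coordinate strictly greater than `H`. -/
def EU (n : ℕ) (H : ℝ) : Set (BuyerType n) :=
  {v | {i : Fin n | H < (v i : ℝ)}.Subsingleton}

/-- A menu is `E`-exclusive if every entry priced above `E` allocates at most one item with
positive probability. -/
def Exclusive {n : ℕ} (E : ℝ) (M : Set (Outcome n)) : Prop :=
  ∀ e ∈ M, E < e.2 → {i : Fin n | 0 < e.1 i}.Subsingleton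


/-- If Borel sets `A_1, …, A_m` cover the type space, then
`Rev(F) ≤ Σ_i F(A_i)·Rev(F|_{A_i})` (with `F|_S` the conditional measure, which is the zero
measure when `F(S) = 0`, so the convention `F(S)·Rev(F|_S) = 0` for `F(S) = 0` holds
automatically). -/
theorem rev_le_sum_of_cover
    (n : ℕ) (F : Measure (BuyerType n)) (hF : IsProbabilityMeasure F)
    (m : ℕ) (A : Fin m → Set (BuyerType n)) (hA : ∀ i, MeasurableSet (A i))
    (hcover : (⋃ i, A i) = univ) :
    Rev F ≤ ∑ i, F (A i) * Rev (F[|A i]) := by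
  rw [Rev]
  apply iSup₂_le
  rintro Mt ⟨hIR, hChoice⟩
  have hmeas : Measurable fun v => ENNReal.ofReal ((Mt.2 v).2) :=
    ENNReal.measurable_ofReal.comp hChoice.2.2.2
  have key : revenue Mt.2 F ≤ ∑ i, ∫⁻ v in A i, ENNReal.ofReal ((Mt.2 v).2) ∂F := by
    rw [revenue]
    calc ∫⁻ v, ENNReal.ofReal ((Mt.2 v).2) ∂F
        = ∫⁻ v in ⋃ i, A i, ENNReal.ofReal ((Mt.2 v).2) ∂F := by
          rw [hcover, Measure.restrict_univ]
      _ ≤ ∑' i, ∫⁻ v in A i, ENNReal.ofReal ((Mt.2 v).2) ∂F :=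
          lintegral_iUnion_le _ _
      _ = ∑ i, ∫⁻ v in A i, ENNReal.ofReal ((Mt.2 v).2) ∂F := tsum_fintype _
  refine key.trans (Finset.sum_le_sum fun i _ => ?_)
  by_cases h0 : F (A i) = 0
  · rw [setLIntegral_measure_zero _ _ h0]
    exact zero_le
  · have hfin : F (A i) ≠ ∞ := (measure_lt_top F _).ne
    have heq : ∫⁻ v in A i, ENNReal.ofReal ((Mt.2 v).2) ∂F
        = F (A i) * revenue Mt.2 (F[|A i]) := by
      rw [revenue, ProbabilityTheory.cond, lintegral_smul_measure, smul_eq_mul, ← mul_assoc,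
        ENNReal.mul_inv_cancel h0 hfin, one_mul]
    rw [heq]
    refine mul_le_mul_right ?_ _
    exact le_iSup₂ (f := fun (Mt : Set (Outcome n) × (BuyerType n → Outcome n))
      (_ : IRMenu Mt.1 ∧ IsChoice Mt.1 Mt.2) => revenue Mt.2 (F[|A i])) Mt ⟨hIR, hChoice⟩

end
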